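/- Let 0 < δ < 10⁻⁵, x > 1, ϑ ∈ [1/2, 5/8], x^{2δ} ≤ N ≤ x^{1/3+δ}, 1 ≤ D ≤ x^{ϑ−2δ}, and suppose x^{(5ϑ−2)/3 − δ} ≤ N. Then any d = p₁⋯p_r with primes p₁ ≥ ⋯ ≥ p_r satisfying p₁⋯p_{j−1}p_j² ≤ D for all j ≤ r admits a factorization d = d₁d₂d₃ into positive integers with d₁ ≤ N x^{−δ}, N² d₂ d₃² ≤ x^{1−δ}, and N² d₂⁵ d₃² ≤ x^{2−δ}. -/

import Mathlib

open scoped BigOperators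

private lemma prod_filter_castSucc' (r : ℕ) (p : Fin (r+1) → ℕ) (j : Fin r) :
    ∏ i ∈ Finset.univ.filter (· < Fin.castSucc j), p i
      = ∏ i ∈ Finset.univ.filter (· < j), p (Fin.castSucc i) := by
  have hset : Finset.univ.filter (· < Fin.castSucc j)
      = (Finset.univ.filter (· < j)).map ⟨Fin.castSucc, Fin.castSucc_injective r⟩ := by
    ext k
    simp only [Finset.mem_filter, Finset.mem_map, Finset.mem_univ, true_and,
      Function.Embedding.coeFn_mk]
    constructor
    · intro hk
      exact ⟨k.castPred (Fin.ne_last_of_lt hk), by rw [Fin.lt_iff_val_lt_val] at hk ⊢; simpa using hk, by simp⟩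
    · rintro ⟨i, hi, rfl⟩
      simpa using hi
  rw [hset, Finset.prod_map]
  rfl

private lemma prod_filter_last' (r : ℕ) (p : Fin (r+1) → ℕ) :
    ∏ i ∈ Finset.univ.filter (· < Fin.last r), p i = ∏ i : Fin r, p (Fin.castSucc i) := by
  have hset : Finset.univ.filter (· < Fin.last r)
      = (Finset.univ : Finset (Fin r)).map ⟨Fin.castSucc, Fin.castSucc_injective r⟩ := by
    ext k
    simp only [Finset.mem_filter, Finset.mem_map, Finset.mem_univ, true_and,
      Function.Embedding.coeFn_mk, Fin.lt_iff_val_lt_val]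
    constructor
    · intro hk
      exact ⟨k.castPred (by intro h; subst h; simp at hk), by simp⟩
    · rintro ⟨i, rfl⟩
      simpa using i.isLt
  rw [hset, Finset.prod_map]
  rfl

private lemma greedy_two' (D₁ D₂ : ℝ) (h1 : 1 ≤ D₁) (h2 : 1 ≤ D₂) :
    ∀ (r : ℕ) (p : Fin r → ℕ), (∀ i, (p i).Prime) →
    (∀ j : Fin r, ((∏ i ∈ Finset.univ.filter (· < j), p i : ℕ) : ℝ) * (p j : ℝ) ^ 2
      ≤ D₁ * D₂) →
    ∃ d₁ d₂ : ℕ, 0 < d₁ ∧ 0 < d₂ ∧ d₁ * d₂ = ∏ i, p i ∧ (d₁ : ℝ) ≤ D₁ ∧ (d₂ : ℝ) ≤ D₂ := by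
  intro r
  induction r with
  | zero => intro p _ _; exact ⟨1, 1, one_pos, one_pos, by simp, by exact_mod_cast h1,
      by exact_mod_cast h2⟩
  | succ r ih =>
    intro p hp hwell
    obtain ⟨d₁, d₂, hd₁, hd₂, hprod, hle₁, hle₂⟩ := ih (fun i => p i.castSucc)
      (fun i => hp _) (fun j => by
        have := hwell j.castSucc
        rwa [prod_filter_castSucc'] at this)
    set q := p (Fin.last r) with hq
    have hq2 : 2 ≤ q := (hp _).two_le
    have hqpos : (0:ℝ) < q := by positivity
    have hd₁pos : (0:ℝ) < d₁ := by exact_mod_cast hd₁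
    have hd₂pos : (0:ℝ) < d₂ := by exact_mod_cast hd₂
    have hkey : (d₁ : ℝ) * d₂ * (q : ℝ) ^ 2 ≤ D₁ * D₂ := by
      have := hwell (Fin.last r)
      rw [prod_filter_last'] at this
      have : ((d₁ * d₂ : ℕ) : ℝ) * (q : ℝ) ^ 2 ≤ D₁ * D₂ := by
        rw [hprod]; exact_mod_cast this
      push_cast at this
      linarith
    have hprod' : ∏ i, p i = (∏ i : Fin r, p i.castSucc) * q := Fin.prod_univ_castSucc p
    by_cases hcase : (q : ℝ) * d₁ ≤ D₁
    · refine ⟨d₁ * q, d₂, by positivity, hd₂, ?_, by push_cast; linarith, hle₂⟩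
      rw [hprod', ← hprod]; ring
    · refine ⟨d₁, d₂ * q, hd₁, by positivity, ?_, hle₁, ?_⟩
      · rw [hprod', ← hprod]; ring
      · push_cast
        by_contra hcon
        push_neg at hcase hcon
        nlinarith

/-- Two-factor greedy algorithm: with `0 < δ < 10⁻⁵`, `ϑ ∈ [1/2, 5/8]`,
`x^{2δ} ≤ N ≤ x^{1/3+δ}`, `1 ≤ D ≤ x^{ϑ−2δ}`, `x^{(5ϑ−2)/3−δ} ≤ N`, any
`d = p₁⋯p_r` with primes `p₁ ≥ ⋯ ≥ p_r` and `p₁⋯p_{j−1}p_j² ≤ D` for all `j ≤ r`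
admits a factorization `d = d₁d₂d₃` with `d₁ ≤ N x^{−δ}`, `N²d₂d₃² ≤ x^{1−δ}`,
`N²d₂⁵d₃² ≤ x^{2−δ}`. -/
theorem two_factor_greedy (δ x ϑ N D : ℝ) (hδ : 0 < δ) (hδ' : δ < 1 / 100000)
    (hx : 1 < x) (hϑ1 : 1 / 2 ≤ ϑ) (hϑ2 : ϑ ≤ 5 / 8)
    (hN1 : x ^ (2 * δ) ≤ N) (hN2 : N ≤ x ^ ((1 : ℝ) / 3 + δ))
    (hD1 : 1 ≤ D) (hD2 : D ≤ x ^ (ϑ - 2 * δ))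
    (hN3 : x ^ ((5 * ϑ - 2) / 3 - δ) ≤ N)
    (r : ℕ) (p : Fin r → ℕ) (hp : ∀ i, (p i).Prime)
    (hmono : ∀ i j : Fin r, i ≤ j → p j ≤ p i)
    (hwell : ∀ j : Fin r,
      ((∏ i ∈ Finset.univ.filter (· < j), p i : ℕ) : ℝ) * (p j : ℝ) ^ 2 ≤ D) :
    ∃ d₁ d₂ d₃ : ℕ, 0 < d₁ ∧ 0 < d₂ ∧ 0 < d₃ ∧ d₁ * d₂ * d₃ = ∏ i, p i ∧
      (d₁ : ℝ) ≤ N * x ^ (-δ) ∧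
      N ^ 2 * (d₂ : ℝ) * (d₃ : ℝ) ^ 2 ≤ x ^ (1 - δ) ∧
      N ^ 2 * (d₂ : ℝ) ^ 5 * (d₃ : ℝ) ^ 2 ≤ x ^ (2 - δ) := by
  have hx0 : (0:ℝ) < x := lt_trans one_pos hx
  have hN0 : (0:ℝ) < N := lt_of_lt_of_le (Real.rpow_pos_of_pos hx0 _) hN1
  have ha0 : (0:ℝ) < x ^ (ϑ - δ) := Real.rpow_pos_of_pos hx0 _
  set D₁ : ℝ := N * x ^ (-δ) with hD₁def
  set D₂ : ℝ := x ^ (ϑ - δ) / N with hD₂def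
  have hD₁1 : 1 ≤ D₁ := by
    have h1 : x ^ (2*δ) * x ^ (-δ) ≤ D₁ :=
      mul_le_mul_of_nonneg_right hN1 (Real.rpow_pos_of_pos hx0 _).le
    have h2 : x ^ (2*δ) * x ^ (-δ) = x ^ δ := by
      rw [← Real.rpow_add hx0]; ring_nf
    have h3 : (1:ℝ) ≤ x ^ δ := Real.one_le_rpow hx.le hδ.le
    linarith
  have hD₂1 : 1 ≤ D₂ := by
    rw [hD₂def, le_div_iff₀ hN0, one_mul]
    calc N ≤ x ^ ((1:ℝ)/3 + δ) := hN2
      _ ≤ x ^ (ϑ - δ) := Real.rpow_le_rpow_of_exponent_le hx.le (by linarith)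
  have hDD : D ≤ D₁ * D₂ := by
    have : D₁ * D₂ = x ^ (ϑ - 2 * δ) := by
      rw [hD₁def, hD₂def]
      field_simp
      rw [← Real.rpow_add hx0]; congr 1; ring
    rw [this]; exact hD2
  obtain ⟨d₁, d₂, hd₁, hd₂, hprod, hle₁, hle₂⟩ := greedy_two' D₁ D₂ hD₁1 hD₂1 r p hp
    (fun j => le_trans (hwell j) hDD)
  refine ⟨d₁, d₂, 1, hd₁, hd₂, one_pos, by simpa using hprod, hle₁, ?_, ?_⟩
  · have h1 : N ^ 2 * (d₂ : ℝ) * ((1:ℕ):ℝ)^2 ≤ N ^ 2 * (x ^ (ϑ - δ) / N) := by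
      push_cast
      rw [one_pow, mul_one]
      exact mul_le_mul_of_nonneg_left hle₂ (by positivity)
    have h2 : N ^ 2 * (x ^ (ϑ - δ) / N) = N * x ^ (ϑ - δ) := by
      field_simp
    have h3 : N * x ^ (ϑ - δ) ≤ x ^ ((1:ℝ)/3 + δ) * x ^ (ϑ - δ) :=
      mul_le_mul_of_nonneg_right hN2 ha0.le
    have h4 : x ^ ((1:ℝ)/3 + δ) * x ^ (ϑ - δ) = x ^ ((1:ℝ)/3 + ϑ) := by
      rw [← Real.rpow_add hx0]; ring_nf
    have h5 : x ^ ((1:ℝ)/3 + ϑ) ≤ x ^ (1 - δ) :=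
      Real.rpow_le_rpow_of_exponent_le hx.le (by linarith)
    push_cast
    push_cast at h1
    linarith
  · have hd5 : (d₂ : ℝ) ^ 5 ≤ (x ^ (ϑ - δ) / N) ^ 5 :=
      pow_le_pow_left₀ (by positivity) hle₂ 5
    have h1 : N ^ 2 * (d₂ : ℝ) ^ 5 ≤ N ^ 2 * (x ^ (ϑ - δ) / N) ^ 5 :=
      mul_le_mul_of_nonneg_left hd5 (by positivity)
    have h2 : N ^ 2 * (x ^ (ϑ - δ) / N) ^ 5 = (x ^ (ϑ - δ)) ^ 5 / N ^ 3 := by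
      field_simp
    have hN3' : x ^ (5 * ϑ - 2 - 3 * δ) ≤ N ^ 3 := by
      have h : (x ^ ((5 * ϑ - 2) / 3 - δ)) ^ (3:ℕ) ≤ N ^ 3 :=
        pow_le_pow_left₀ (by positivity) hN3 3
      rwa [← Real.rpow_natCast (x ^ ((5 * ϑ - 2) / 3 - δ)) 3, ← Real.rpow_mul hx0.le,
        show ((5 * ϑ - 2) / 3 - δ) * ((3:ℕ):ℝ) = 5 * ϑ - 2 - 3 * δ by push_cast; ring] at h
    have h3 : (x ^ (ϑ - δ)) ^ 5 / N ^ 3 ≤ (x ^ (ϑ - δ)) ^ 5 / x ^ (5 * ϑ - 2 - 3 * δ) :=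
      div_le_div_of_nonneg_left (by positivity) (Real.rpow_pos_of_pos hx0 _) hN3'
    have h4 : (x ^ (ϑ - δ)) ^ 5 / x ^ (5 * ϑ - 2 - 3 * δ) = x ^ (2 - 2*δ) := by
      rw [← Real.rpow_natCast (x ^ (ϑ - δ)) 5, ← Real.rpow_mul hx0.le,
        ← Real.rpow_sub hx0]
      congr 1
      push_cast
      ring
    have h5 : x ^ (2 - 2*δ) ≤ x ^ (2 - δ) :=
      Real.rpow_le_rpow_of_exponent_le hx.le (by linarith)
    calc N ^ 2 * (d₂ : ℝ) ^ 5 * ((1:ℕ):ℝ)^2 = N ^ 2 * (d₂ : ℝ) ^ 5 := by push_cast; ring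
      _ ≤ N ^ 2 * (x ^ (ϑ - δ) / N) ^ 5 := h1
      _ = (x ^ (ϑ - δ)) ^ 5 / N ^ 3 := h2
      _ ≤ (x ^ (ϑ - δ)) ^ 5 / x ^ (5 * ϑ - 2 - 3 * δ) := h3
      _ = x ^ (2 - 2*δ) := h4
      _ ≤ x ^ (2 - δ) := h5
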